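/- arXiv:2405.03469 — 2 statements merged into one kernel-verified Lean document; each statement's English description precedes it below -/
import Mathlib

section
/- Let β > 0 and define y : (0,∞) → ℝ by y(x) := √x · K(1/(β+2), (2/(β+2))·x^((β+2)/2)), where K(ν,z) := ∫₀^∞ exp(−z·cosh t)·cosh(ν·t) dt. Then y(x) → 0 as x → ∞, and y is square-integrable on (0,∞), i.e. ∫₀^∞ y(x)² dx < ∞. -/
open Set Filter Real MeasureTheory

/-- Modified Bessel function of the second kind (integral representation):
`K(ν, z) = ∫₀^∞ exp(−z cosh t) cosh(ν t) dt`. -/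
noncomputable def besselK (ν z : ℝ) : ℝ :=
  ∫ t in Set.Ioi (0 : ℝ), Real.exp (-z * Real.cosh t) * Real.cosh (ν * t)

lemma half_exp_le_cosh (t : ℝ) : Real.exp t / 2 ≤ Real.cosh t := by
  rw [Real.cosh_eq]
  have := (Real.exp_pos (-t)).le
  linarith

lemma cosh_le_exp_self {t : ℝ} (ht : 0 ≤ t) : Real.cosh t ≤ Real.exp t := by
  rw [Real.cosh_eq]
  have : Real.exp (-t) ≤ Real.exp t := Real.exp_le_exp.2 (by linarith)
  linarith

/-- pointwise bound of the Bessel integrand. -/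
lemma integrand_le {ν z : ℝ} (hν : 0 ≤ ν) (hz : 0 < z) {t : ℝ} (ht : 0 ≤ t) :
    Real.exp (-z * Real.cosh t) * Real.cosh (ν * t)
      ≤ Real.exp (ν * t) * Real.exp (-(z / 2 * Real.exp t)) := by
  have h1 : Real.exp (-z * Real.cosh t) ≤ Real.exp (-(z / 2 * Real.exp t)) := by
    apply Real.exp_le_exp.2
    have := half_exp_le_cosh t
    nlinarith
  have h2 : Real.cosh (ν * t) ≤ Real.exp (ν * t) := cosh_le_exp_self (by positivity)
  have h3 : (0:ℝ) < Real.cosh (ν * t) := Real.cosh_pos _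
  nlinarith [Real.exp_pos (-z * Real.cosh t), Real.exp_pos (-(z / 2 * Real.exp t))]

lemma G_integrableOn {ν z : ℝ} (hν : 0 < ν) (hz : 0 < z) :
    IntegrableOn (fun u : ℝ => u ^ (ν - 1) * Real.exp (-(z / 2 * u))) (Ioi 0) := by
  have := integrableOn_rpow_mul_exp_neg_mul_rpow (p := 1) (s := ν - 1) (b := z / 2)
    (by linarith) one_pos (by positivity)
  simpa [Real.rpow_one, mul_comm] using this

lemma G_integral {ν z : ℝ} (hν : 0 < ν) (hz : 0 < z) :
    ∫ u in Ioi (0:ℝ), u ^ (ν - 1) * Real.exp (-(z / 2 * u)) = (2 / z) ^ ν * Real.Gamma ν := by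
  have := Real.integral_rpow_mul_exp_neg_mul_Ioi (a := ν) (r := z / 2) hν (by positivity)
  rw [this, one_div, inv_div]

lemma exp_image_Ioi : Real.exp '' Ioi (0:ℝ) = Ioi 1 := by
  ext y
  constructor
  · rintro ⟨t, ht, rfl⟩
    exact Real.one_lt_exp_iff.2 ht
  · intro hy
    have hy0 : (0:ℝ) < y := lt_trans one_pos hy
    exact ⟨Real.log y, Real.log_pos hy, Real.exp_log hy0⟩

lemma g_eq {ν : ℝ} (z t : ℝ) :
    |Real.exp t| • ((Real.exp t) ^ (ν - 1) * Real.exp (-(z / 2 * Real.exp t)))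
      = Real.exp (ν * t) * Real.exp (-(z / 2 * Real.exp t)) := by
  rw [abs_of_pos (Real.exp_pos t), smul_eq_mul, ← mul_assoc]
  congr 1
  rw [← Real.exp_one_rpow t, ← Real.rpow_mul (Real.exp_pos 1).le,
      ← Real.rpow_add (Real.exp_pos 1), Real.exp_one_rpow]
  congr 1
  ring

lemma g_integrableOn {ν z : ℝ} (hν : 0 < ν) (hz : 0 < z) :
    IntegrableOn (fun t : ℝ => Real.exp (ν * t) * Real.exp (-(z / 2 * Real.exp t))) (Ioi 0) := by
  have hG : IntegrableOn (fun u : ℝ => u ^ (ν - 1) * Real.exp (-(z / 2 * u)))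
      (Real.exp '' Ioi 0) := by
    rw [exp_image_Ioi]
    exact (G_integrableOn hν hz).mono_set fun u hu => mem_Ioi.2 (lt_trans one_pos (mem_Ioi.1 hu))
  have h := (integrableOn_image_iff_integrableOn_abs_deriv_smul (s := Ioi (0:ℝ))
      measurableSet_Ioi (fun x _ => (Real.hasDerivAt_exp x).hasDerivWithinAt)
      (Real.exp_injective.injOn) _).mp hG
  exact h.congr_fun (fun t _ => g_eq z t) measurableSet_Ioi

lemma g_integral_le {ν z : ℝ} (hν : 0 < ν) (hz : 0 < z) :
    ∫ t in Ioi (0:ℝ), Real.exp (ν * t) * Real.exp (-(z / 2 * Real.exp t))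
      ≤ (2 / z) ^ ν * Real.Gamma ν := by
  have heq := integral_image_eq_integral_abs_deriv_smul (s := Ioi (0:ℝ)) measurableSet_Ioi
    (f := Real.exp) (f' := Real.exp)
    (fun x _ => (Real.hasDerivAt_exp x).hasDerivWithinAt)
    (Real.exp_injective.injOn)
    (fun u : ℝ => u ^ (ν - 1) * Real.exp (-(z / 2 * u)))
  rw [exp_image_Ioi] at heq
  have heq2 : ∫ t in Ioi (0:ℝ), Real.exp (ν * t) * Real.exp (-(z / 2 * Real.exp t))
      = ∫ u in Ioi (1:ℝ), u ^ (ν - 1) * Real.exp (-(z / 2 * u)) := by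
    rw [heq]
    exact (setIntegral_congr_fun measurableSet_Ioi fun t _ => (g_eq (ν := ν) z t)).symm
  rw [heq2, ← G_integral hν hz]
  apply setIntegral_mono_set (G_integrableOn hν hz)
  · filter_upwards [ae_restrict_mem measurableSet_Ioi] with u hu
    have : (0:ℝ) < u := hu
    positivity
  · exact HasSubset.Subset.eventuallyLE (fun u hu => mem_Ioi.2 (lt_trans one_pos (mem_Ioi.1 hu)))

lemma besselK_integrand_integrableOn {ν z : ℝ} (hν : 0 < ν) (hz : 0 < z) :
    IntegrableOn (fun t : ℝ => Real.exp (-z * Real.cosh t) * Real.cosh (ν * t)) (Ioi 0) := by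
  apply (g_integrableOn hν hz).mono'
  · exact (Continuous.aestronglyMeasurable (by continuity)).restrict
  · filter_upwards [ae_restrict_mem measurableSet_Ioi] with t ht
    have ht' : (0:ℝ) ≤ t := le_of_lt ht
    rw [Real.norm_eq_abs, abs_of_nonneg (by positivity)]
    exact integrand_le hν.le hz ht'

lemma besselK_nonneg {ν z : ℝ} : 0 ≤ besselK ν z := by
  apply setIntegral_nonneg measurableSet_Ioi
  intro t _
  positivity

lemma besselK_le_gamma {ν z : ℝ} (hν : 0 < ν) (hz : 0 < z) :
    besselK ν z ≤ (2 / z) ^ ν * Real.Gamma ν := by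
  refine le_trans ?_ (g_integral_le hν hz)
  apply setIntegral_mono_on (besselK_integrand_integrableOn hν hz) (g_integrableOn hν hz)
    measurableSet_Ioi
  exact fun t ht => integrand_le hν.le hz (le_of_lt ht)

lemma besselK_le_exp {ν z : ℝ} (hν : 0 < ν) (hz : 1 ≤ z) :
    besselK ν z ≤ Real.exp (1 - z) * besselK ν 1 := by
  have h0z : (0:ℝ) < z := lt_of_lt_of_le one_pos hz
  unfold besselK
  rw [← integral_const_mul]
  apply setIntegral_mono_on (besselK_integrand_integrableOn hν h0z)
    ((besselK_integrand_integrableOn hν one_pos).const_mul _) measurableSet_Ioi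
  intro t _
  have hc := Real.one_le_cosh t
  have h1 : Real.exp (-z * Real.cosh t) ≤ Real.exp (1 - z) * Real.exp (-1 * Real.cosh t) := by
    rw [← Real.exp_add]
    apply Real.exp_le_exp.2
    nlinarith
  have h2 : (0:ℝ) < Real.cosh (ν * t) := Real.cosh_pos _
  calc Real.exp (-z * Real.cosh t) * Real.cosh (ν * t)
      ≤ (Real.exp (1 - z) * Real.exp (-1 * Real.cosh t)) * Real.cosh (ν * t) := by nlinarith
    _ = Real.exp (1 - z) * (Real.exp (-1 * Real.cosh t) * Real.cosh (ν * t)) := by ring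

lemma besselK_comp_measurable (a c p : ℝ) :
    Measurable (fun x : ℝ => besselK a (c * x ^ p)) := by
  have h : StronglyMeasurable (fun q : ℝ × ℝ =>
      Real.exp (-(c * q.1 ^ p) * Real.cosh q.2) * Real.cosh (a * q.2)) := by
    apply Measurable.stronglyMeasurable
    fun_prop
  exact (h.integral_prod_right' (ν := volume.restrict (Ioi 0))).measurable

/-- for `β > 0`, the function
`y(x) = √x · K(1/(β+2), (2/(β+2)) x^((β+2)/2))` tends to `0` as `x → ∞` and is
square-integrable on `(0,∞)`. -/
theorem stmt6 (β : ℝ) (hβ : 0 < β) :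
    Tendsto (fun x : ℝ =>
        Real.sqrt x * besselK (1 / (β + 2)) (2 / (β + 2) * x ^ ((β + 2) / 2)))
      atTop (nhds 0) ∧
    MeasureTheory.IntegrableOn
      (fun x : ℝ =>
        (Real.sqrt x * besselK (1 / (β + 2)) (2 / (β + 2) * x ^ ((β + 2) / 2))) ^ 2)
      (Ioi (0 : ℝ)) := by
  have hb2 : (0:ℝ) < β + 2 := by linarith
  set ν : ℝ := 1 / (β + 2) with hνdef
  have hν : 0 < ν := by positivity
  set y : ℝ → ℝ := fun x => Real.sqrt x * besselK ν (2 / (β + 2) * x ^ ((β + 2) / 2)) with hydef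
  set B : ℝ := besselK ν 1 with hBdef
  have hB : 0 ≤ B := besselK_nonneg
  -- positivity of the argument
  have hzpos : ∀ x : ℝ, 0 < x → 0 < 2 / (β + 2) * x ^ ((β + 2) / 2) := by
    intro x hx; positivity
  -- y is nonnegative
  have hy0 : ∀ x : ℝ, 0 ≤ y x := fun x =>
    mul_nonneg (Real.sqrt_nonneg x) besselK_nonneg
  -- uniform bound M on (0, ∞)
  set M : ℝ := (β + 2) ^ ν * Real.Gamma ν with hMdef
  have hM : 0 ≤ M := by
    have := Real.Gamma_pos_of_pos hν
    positivity
  have hyM : ∀ x : ℝ, 0 < x → y x ≤ M := by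
    intro x hx
    have hz := hzpos x hx
    have h1 : y x ≤ Real.sqrt x * ((2 / (2 / (β + 2) * x ^ ((β + 2) / 2))) ^ ν
        * Real.Gamma ν) := by
      exact mul_le_mul_of_nonneg_left (besselK_le_gamma hν hz) (Real.sqrt_nonneg x)
    refine h1.trans (le_of_eq ?_)
    have hxp : (0:ℝ) < x ^ ((β + 2) / 2) := by positivity
    have h2 : 2 / (2 / (β + 2) * x ^ ((β + 2) / 2)) = (β + 2) / x ^ ((β + 2) / 2) := by
      field_simp
    have h3 : (x ^ ((β + 2) / 2)) ^ ν = Real.sqrt x := by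
      rw [← Real.rpow_mul hx.le]
      have he : (β + 2) / 2 * ν = 1 / 2 := by
        rw [hνdef]; field_simp
      rw [he, ← Real.sqrt_eq_rpow]
    have hs : Real.sqrt x ≠ 0 := ne_of_gt (Real.sqrt_pos.2 hx)
    rw [h2, Real.div_rpow hb2.le hxp.le, h3]
    field_simp
    exact hMdef.symm
  -- threshold for the decay regime
  set x₁ : ℝ := max 1 (((β + 2) / 2) ^ (2 / β)) with hx₁def
  have hx₁1 : (1:ℝ) ≤ x₁ := le_max_left _ _
  have hx₁0 : (0:ℝ) < x₁ := lt_of_lt_of_le one_pos hx₁1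
  have hkey : ∀ x : ℝ, x₁ ≤ x → x ≤ 2 / (β + 2) * x ^ ((β + 2) / 2) := by
    intro x hx
    have hx1 : (1:ℝ) ≤ x := hx₁1.trans hx
    have hx0 : (0:ℝ) < x := lt_of_lt_of_le one_pos hx1
    have hsplit : x ^ ((β + 2) / 2) = x * x ^ (β / 2) := by
      rw [show (β + 2) / 2 = 1 + β / 2 by ring, Real.rpow_add hx0, Real.rpow_one]
    have hpow : (β + 2) / 2 ≤ x ^ (β / 2) := by
      have h1 : ((β + 2) / 2) ^ (2 / β) ≤ x := le_trans (le_max_right _ _) hx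
      have h2 : (((β + 2) / 2) ^ (2 / β)) ^ (β / 2) ≤ x ^ (β / 2) :=
        Real.rpow_le_rpow (by positivity) h1 (by positivity)
      have h3 : (2 : ℝ) / β * (β / 2) = 1 := by field_simp
      rwa [← Real.rpow_mul (by positivity), h3, Real.rpow_one] at h2
    calc x = 2 / (β + 2) * (x * ((β + 2) / 2)) := by field_simp
      _ ≤ 2 / (β + 2) * (x * x ^ (β / 2)) := by
          have h4 : x * ((β + 2) / 2) ≤ x * x ^ (β / 2) :=
            mul_le_mul_of_nonneg_left hpow hx0.le
          exact mul_le_mul_of_nonneg_left h4 (by positivity)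
      _ = 2 / (β + 2) * x ^ ((β + 2) / 2) := by rw [hsplit]
  -- decay bound
  have hdecay : ∀ x : ℝ, x₁ ≤ x →
      y x ≤ (Real.exp 1 * B) * (x ^ (1/2:ℝ) * Real.exp (-1 * x)) := by
    intro x hx
    have hx1 : (1:ℝ) ≤ x := hx₁1.trans hx
    have hx0 : (0:ℝ) < x := lt_of_lt_of_le one_pos hx1
    have hzx := hkey x hx
    have hz1 : (1:ℝ) ≤ 2 / (β + 2) * x ^ ((β + 2) / 2) := hx1.trans hzx
    have h1 : besselK ν (2 / (β + 2) * x ^ ((β + 2) / 2))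
        ≤ Real.exp (1 - 2 / (β + 2) * x ^ ((β + 2) / 2)) * B := besselK_le_exp hν hz1
    have h2 : Real.exp (1 - 2 / (β + 2) * x ^ ((β + 2) / 2)) ≤ Real.exp (1 - x) :=
      Real.exp_le_exp.2 (by linarith)
    have h3 : y x ≤ Real.sqrt x * (Real.exp (1 - x) * B) := by
      refine le_trans (mul_le_mul_of_nonneg_left h1 (Real.sqrt_nonneg x)) ?_
      exact mul_le_mul_of_nonneg_left (mul_le_mul_of_nonneg_right h2 hB) (Real.sqrt_nonneg x)
    refine h3.trans (le_of_eq ?_)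
    rw [Real.sqrt_eq_rpow, show (1 - x) = 1 + -1 * x by ring, Real.exp_add]
    ring
  constructor
  · -- Tendsto
    have hlim : Tendsto (fun x : ℝ =>
        (Real.exp 1 * B) * (x ^ (1/2:ℝ) * Real.exp (-1 * x))) atTop (nhds 0) := by
      have h := (tendsto_rpow_mul_exp_neg_mul_atTop_nhds_zero (1/2) 1 one_pos).const_mul
        (Real.exp 1 * B)
      simpa [mul_comm] using h
    refine tendsto_of_tendsto_of_tendsto_of_le_of_le' tendsto_const_nhds hlim ?_ ?_
    · exact Eventually.of_forall hy0
    · filter_upwards [eventually_ge_atTop x₁] with x hx using hdecay x hx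
  · -- Integrability
    have hmeas : Measurable y := by
      rw [hydef]
      exact Real.continuous_sqrt.measurable.mul
        (besselK_comp_measurable ν (2 / (β + 2)) ((β + 2) / 2))
    have hsm : ∀ μ : MeasureTheory.Measure ℝ,
        AEStronglyMeasurable (fun x => y x ^ 2) μ := fun μ =>
      ((hmeas.pow_const 2).aestronglyMeasurable)
    have hsplit : Ioi (0:ℝ) = Ioc 0 x₁ ∪ Ioi x₁ := (Ioc_union_Ioi_eq_Ioi hx₁0.le).symm
    rw [hsplit]
    apply IntegrableOn.union
    · refine Integrable.mono' (g := fun _ => M ^ 2)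
        ((integrableOn_const_iff (C := M ^ 2)).2 (Or.inr measure_Ioc_lt_top)) (hsm _) ?_
      filter_upwards [ae_restrict_mem measurableSet_Ioc] with x hx
      rw [Real.norm_eq_abs, abs_of_nonneg (sq_nonneg _)]
      exact pow_le_pow_left₀ (hy0 x) (hyM x hx.1) 2
    · refine Integrable.mono' (g := fun x => (Real.exp 1 * B) ^ 2 * Real.exp (-1 * x))
        ((exp_neg_integrableOn_Ioi x₁ one_pos).const_mul _) (hsm _) ?_
      filter_upwards [ae_restrict_mem measurableSet_Ioi] with x hx
      have hx' : x₁ ≤ x := le_of_lt hx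
      have hx0 : (0:ℝ) < x := lt_of_lt_of_le hx₁0 hx'
      rw [Real.norm_eq_abs, abs_of_nonneg (sq_nonneg _)]
      calc y x ^ 2 ≤ ((Real.exp 1 * B) * (x ^ (1/2:ℝ) * Real.exp (-1 * x))) ^ 2 :=
            pow_le_pow_left₀ (hy0 x) (hdecay x hx') 2
        _ = (Real.exp 1 * B) ^ 2 * (x * Real.exp (-1 * x) ^ 2) := by
            have h12 : (x ^ (1/2:ℝ)) * (x ^ (1/2:ℝ)) = x := by
              rw [← Real.rpow_add hx0]; norm_num
            calc ((Real.exp 1 * B) * (x ^ (1/2:ℝ) * Real.exp (-1 * x))) ^ 2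
                = (Real.exp 1 * B) ^ 2 * ((x ^ (1/2:ℝ) * (x ^ (1/2:ℝ))) * Real.exp (-1 * x) ^ 2) := by
                  ring
              _ = (Real.exp 1 * B) ^ 2 * (x * Real.exp (-1 * x) ^ 2) := by rw [h12]
        _ ≤ (Real.exp 1 * B) ^ 2 * Real.exp (-1 * x) := by
            apply mul_le_mul_of_nonneg_left ?_ (sq_nonneg _)
            have hxe : x ≤ Real.exp x := le_trans (by linarith) (Real.add_one_le_exp x)
            calc x * Real.exp (-1 * x) ^ 2
                ≤ Real.exp x * Real.exp (-1 * x) ^ 2 := by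
                  apply mul_le_mul_of_nonneg_right hxe (sq_nonneg _)
              _ = Real.exp (-1 * x) := by
                  rw [sq, ← Real.exp_add, ← Real.exp_add]
                  congr 1
                  ring
end

section
/- Let β > 0 and define y : (0,∞) → ℝ by y(x) := √x · K(1/(β+2), (2/(β+2))·x^((β+2)/2)), where K(ν,z) := ∫₀^∞ exp(−z·cosh t)·cosh(ν·t) dt. Then −2·y(x)·y′(x) tends to π·(β+2)/(2·sin(π/(β+2))) as x → 0 from the right. -/
open Set Filter Real

/-- The decaying solution `y₊(x) = √x · K(1/(β+2), (2/(β+2)) x^((β+2)/2))` of the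
anharmonic equation `−y″ + x^β y = 0` on `(0,∞)`. -/
noncomputable def yPlus (β x : ℝ) : ℝ :=
  Real.sqrt x * besselK (1 / (β + 2)) (2 / (β + 2) * x ^ ((β + 2) / 2))

open MeasureTheory

lemma cosh_lower (t : ℝ) (ht : 0 ≤ t) : (t/2+1)^2/2 ≤ Real.cosh t := by
  have h1 : t/2 + 1 ≤ Real.exp (t/2) := by have := Real.add_one_le_exp (t/2); linarith
  have h2 : (t/2+1)^2 ≤ Real.exp t := by
    calc (t/2+1)^2 ≤ (Real.exp (t/2))^2 := by nlinarith [Real.exp_pos (t/2)]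
    _ = Real.exp t := by rw [← Real.exp_nat_mul]; norm_num; ring_nf
  have h3 : Real.exp t / 2 ≤ Real.cosh t := by
    rw [Real.cosh_eq]; have := (Real.exp_pos (-t)).le; linarith
  linarith

lemma eventually_exp_bound (z μ : ℝ) (hz : 0 < z) :
    ∀ᶠ t in atTop, Real.exp (-z * Real.cosh t) * Real.exp (μ * t) ≤ Real.exp (-t) := by
  filter_upwards [eventually_ge_atTop (max 1 (8*(|μ|+1)/z))] with t ht
  have ht1 : (1:ℝ) ≤ t := le_trans (le_max_left _ _) ht
  have ht2 : 8*(|μ|+1)/z ≤ t := le_trans (le_max_right _ _) ht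
  have ht0 : (0:ℝ) ≤ t := by linarith
  have hc := cosh_lower t ht0
  rw [← Real.exp_add, Real.exp_le_exp]
  have hμ : μ ≤ |μ| := le_abs_self μ
  have h8 : 8*(|μ|+1) ≤ z * t := by
    rw [div_le_iff₀ hz] at ht2; linarith
  nlinarith [mul_le_mul_of_nonneg_left hc hz.le, mul_le_mul_of_nonneg_right h8 ht0]

lemma integrable_exp_cosh_mul {z μ C : ℝ} (hz : 0 < z) {g : ℝ → ℝ} (hg : Continuous g)
    (hbound : ∀ t, 0 ≤ t → |g t| ≤ C * Real.exp (μ * t)) :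
    IntegrableOn (fun t => Real.exp (-z * Real.cosh t) * g t) (Ioi 0) := by
  obtain ⟨T, hT⟩ := eventually_atTop.mp (eventually_exp_bound z μ hz)
  have hC : 0 ≤ C := by
    have := hbound 0 le_rfl
    have := abs_nonneg (g 0)
    nlinarith [Real.exp_pos (μ * 0)]
  have hT0 : (0:ℝ) ≤ max T 0 := le_max_right _ _
  have hcont : Continuous (fun t => Real.exp (-z * Real.cosh t) * g t) := by
    continuity
  rw [← Ioc_union_Ioi_eq_Ioi hT0]
  apply IntegrableOn.union
  · exact hcont.integrableOn_Ioc
  · have hint : IntegrableOn (fun t => C * Real.exp (-t)) (Ioi (max T 0)) := by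
      have := (exp_neg_integrableOn_Ioi (max T 0) one_pos).const_mul C
      simpa [IntegrableOn] using this
    apply hint.mono' (hcont.aestronglyMeasurable.restrict)
    filter_upwards [ae_restrict_mem measurableSet_Ioi] with t ht
    have ht' : T ≤ t := le_trans (le_max_left _ _) ht.le
    have ht0 : 0 ≤ t := le_trans (le_max_right _ _) ht.le
    have h1 := hT t ht'
    have h2 := hbound t ht0
    rw [Real.norm_eq_abs, abs_mul, abs_of_pos (Real.exp_pos _)]
    calc Real.exp (-z * Real.cosh t) * |g t|
        ≤ Real.exp (-z * Real.cosh t) * (C * Real.exp (μ * t)) := by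
          exact mul_le_mul_of_nonneg_left h2 (Real.exp_pos _).le
      _ = C * (Real.exp (-z * Real.cosh t) * Real.exp (μ * t)) := by ring
      _ ≤ C * Real.exp (-t) := mul_le_mul_of_nonneg_left h1 hC

lemma cosh_le_exp_abs (x : ℝ) : Real.cosh x ≤ Real.exp |x| := by
  rw [Real.cosh_eq]
  have h1 : Real.exp x ≤ Real.exp |x| := Real.exp_le_exp.mpr (le_abs_self x)
  have h2 : Real.exp (-x) ≤ Real.exp |x| := Real.exp_le_exp.mpr (neg_le_abs x)
  linarith

lemma abs_sinh_le_exp_abs (x : ℝ) : |Real.sinh x| ≤ Real.exp |x| := by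
  rw [Real.sinh_eq, abs_div]
  have h1 : Real.exp x ≤ Real.exp |x| := Real.exp_le_exp.mpr (le_abs_self x)
  have h2 : Real.exp (-x) ≤ Real.exp |x| := Real.exp_le_exp.mpr (neg_le_abs x)
  have := abs_sub (Real.exp x) (Real.exp (-x))
  have e1 := (Real.exp_pos x).le
  have e2 := (Real.exp_pos (-x)).le
  rw [abs_of_nonneg e1, abs_of_nonneg e2] at this
  have : |Real.exp x - Real.exp (-x)| ≤ 2 * Real.exp |x| := by
    rw [abs_sub_le_iff]; constructor <;> nlinarith [Real.exp_pos |x|]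
  calc |Real.exp x - Real.exp (-x)| / |2| = |Real.exp x - Real.exp (-x)| / 2 := by norm_num
    _ ≤ Real.exp |x| := by linarith

lemma integrable_K_integrand (ν z : ℝ) (hz : 0 < z) :
    IntegrableOn (fun t => Real.exp (-z * Real.cosh t) * Real.cosh (ν * t)) (Ioi 0) := by
  apply integrable_exp_cosh_mul (μ := |ν|) (C := 1) hz (by continuity)
  intro t ht
  rw [abs_of_pos (Real.cosh_pos _), one_mul]
  calc Real.cosh (ν * t) ≤ Real.exp |ν * t| := cosh_le_exp_abs _
    _ = Real.exp (|ν| * t) := by rw [abs_mul, abs_of_nonneg ht]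

lemma integrable_J_integrand (ν z : ℝ) (hz : 0 < z) :
    IntegrableOn (fun t => Real.exp (-z * Real.cosh t) * Real.exp (ν * t)) (Ioi 0) := by
  apply integrable_exp_cosh_mul (μ := |ν|) (C := 1) hz (by continuity)
  intro t ht
  rw [abs_of_pos (Real.exp_pos _), one_mul, Real.exp_le_exp]
  exact mul_le_mul_of_nonneg_right (le_abs_self ν) ht

lemma integrable_coshcosh (ν z : ℝ) (hz : 0 < z) :
    IntegrableOn (fun t => Real.exp (-z * Real.cosh t) * (Real.cosh t * Real.cosh (ν * t))) (Ioi 0) := by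
  apply integrable_exp_cosh_mul (μ := 1 + |ν|) (C := 1) hz (by continuity)
  intro t ht
  rw [one_mul, abs_mul, abs_of_pos (Real.cosh_pos _), abs_of_pos (Real.cosh_pos _)]
  calc Real.cosh t * Real.cosh (ν * t) ≤ Real.exp |t| * Real.exp |ν * t| :=
        mul_le_mul (cosh_le_exp_abs _) (cosh_le_exp_abs _) (Real.cosh_pos _).le (Real.exp_pos _).le
    _ = Real.exp (|t| + |ν * t|) := (Real.exp_add _ _).symm
    _ = Real.exp ((1 + |ν|) * t) := by rw [abs_of_nonneg ht, abs_mul, abs_of_nonneg ht]; ring_nf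

lemma integrable_sinhsinh (ν z : ℝ) (hz : 0 < z) :
    IntegrableOn (fun t => Real.exp (-z * Real.cosh t) * (Real.sinh t * Real.sinh (ν * t))) (Ioi 0) := by
  apply integrable_exp_cosh_mul (μ := 1 + |ν|) (C := 1) hz (by continuity)
  intro t ht
  rw [one_mul, abs_mul]
  calc |Real.sinh t| * |Real.sinh (ν * t)| ≤ Real.exp |t| * Real.exp |ν * t| :=
        mul_le_mul (abs_sinh_le_exp_abs _) (abs_sinh_le_exp_abs _) (abs_nonneg _) (Real.exp_pos _).le
    _ = Real.exp (|t| + |ν * t|) := (Real.exp_add _ _).symm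
    _ = Real.exp ((1 + |ν|) * t) := by rw [abs_of_nonneg ht, abs_mul, abs_of_nonneg ht]; ring_nf

lemma besselK_recurrence (ν z : ℝ) (hz : 0 < z) :
    2 * ν * besselK ν z = z * (besselK (ν+1) z - besselK (ν-1) z) := by
  set f : ℝ → ℝ := fun t => Real.exp (-z * Real.cosh t) * Real.sinh (ν * t) with hf
  set f' : ℝ → ℝ := fun t =>
    Real.exp (-z * Real.cosh t) * (ν * Real.cosh (ν * t) - z * (Real.sinh t * Real.sinh (ν * t))) with hf'
  have hderiv : ∀ t : ℝ, HasDerivAt f (f' t) t := by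
    intro t
    have h1 : HasDerivAt (fun t : ℝ => -z * Real.cosh t) (-z * Real.sinh t) t :=
      (Real.hasDerivAt_cosh t).const_mul (-z)
    have h2 : HasDerivAt (fun t : ℝ => Real.exp (-z * Real.cosh t))
        (Real.exp (-z * Real.cosh t) * (-z * Real.sinh t)) t := h1.exp
    have h3 : HasDerivAt (fun t : ℝ => Real.sinh (ν * t)) (Real.cosh (ν * t) * ν) t := by
      simpa [Function.comp_def] using (Real.hasDerivAt_sinh (ν * t)).comp t ((hasDerivAt_id t).const_mul ν)
    have := h2.mul h3
    refine this.congr_deriv ?_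
    simp only [hf']; ring
  have hint' : IntegrableOn f' (Ioi 0) := by
    have h1 := (integrable_K_integrand ν z hz).const_mul ν
    have h2 := (integrable_sinhsinh ν z hz).const_mul z
    have := h1.sub h2
    apply this.congr
    apply Filter.Eventually.of_forall
    intro t; simp only [hf', Pi.sub_apply]; ring
  have htends : Tendsto f atTop (nhds 0) := by
    apply squeeze_zero_norm' _ (Real.tendsto_exp_neg_atTop_nhds_zero)
    filter_upwards [eventually_exp_bound z |ν| hz, eventually_ge_atTop (0:ℝ)] with t ht ht0
    rw [Real.norm_eq_abs, hf, abs_mul, abs_of_pos (Real.exp_pos _)]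
    calc Real.exp (-z * Real.cosh t) * |Real.sinh (ν * t)|
        ≤ Real.exp (-z * Real.cosh t) * Real.exp (|ν| * t) := by
          apply mul_le_mul_of_nonneg_left _ (Real.exp_pos _).le
          calc |Real.sinh (ν * t)| ≤ Real.exp |ν * t| := abs_sinh_le_exp_abs _
            _ = Real.exp (|ν| * t) := by rw [abs_mul, abs_of_nonneg ht0]
      _ ≤ Real.exp (-t) := ht
  have key : ∫ t in Ioi (0:ℝ), f' t = 0 - f 0 :=
    integral_Ioi_of_hasDerivAt_of_tendsto (hderiv 0).continuousAt.continuousWithinAt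
      (fun t _ => hderiv t) hint' htends
  have hf0 : f 0 = 0 := by simp [hf]
  rw [hf0, sub_zero] at key
  -- expand ∫ f'
  have expand : ∫ t in Ioi (0:ℝ), f' t
      = ν * besselK ν z - z * ((besselK (ν+1) z - besselK (ν-1) z) / 2) := by
    have e1 : ∀ t : ℝ, f' t = ν * (Real.exp (-z * Real.cosh t) * Real.cosh (ν * t))
        - z * (Real.exp (-z * Real.cosh t) * (Real.sinh t * Real.sinh (ν * t))) := by
      intro t; simp only [hf']; ring
    rw [setIntegral_congr_fun measurableSet_Ioi (fun t _ => e1 t)]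
    rw [integral_sub ((integrable_K_integrand ν z hz).const_mul ν)
      ((integrable_sinhsinh ν z hz).const_mul z),
      integral_const_mul, integral_const_mul]
    have e2 : ∀ t : ℝ, Real.exp (-z * Real.cosh t) * (Real.sinh t * Real.sinh (ν * t))
        = (Real.exp (-z * Real.cosh t) * Real.cosh ((ν+1) * t)
          - Real.exp (-z * Real.cosh t) * Real.cosh ((ν-1) * t)) / 2 := by
      intro t
      have c1 : Real.cosh ((ν+1) * t) = Real.cosh (ν*t + t) := by ring_nf
      have c2 : Real.cosh ((ν-1) * t) = Real.cosh (ν*t - t) := by ring_nf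
      rw [c1, c2, Real.cosh_add, Real.cosh_sub]
      ring
    rw [setIntegral_congr_fun measurableSet_Ioi (fun t _ => e2 t)]
    rw [integral_div, integral_sub (integrable_K_integrand (ν+1) z hz)
      (integrable_K_integrand (ν-1) z hz)]
    rfl
  rw [expand] at key
  linarith

lemma hasDerivAt_besselK (ν z : ℝ) (hz : 0 < z) :
    HasDerivAt (fun w => besselK ν w)
      (-(1/2) * (besselK (ν-1) z + besselK (ν+1) z)) z := by
  set F : ℝ → ℝ → ℝ := fun w t => Real.exp (-w * Real.cosh t) * Real.cosh (ν * t) with hF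
  set F' : ℝ → ℝ → ℝ := fun w t =>
    -(Real.cosh t) * (Real.exp (-w * Real.cosh t) * Real.cosh (ν * t)) with hF'
  have hcont : ∀ w : ℝ, Continuous (F w) := fun w => by continuity
  have hcont' : ∀ w : ℝ, Continuous (F' w) := fun w => by continuity
  have hε : 0 < z/2 := by linarith
  have main := hasDerivAt_integral_of_dominated_loc_of_deriv_le
    (μ := volume.restrict (Ioi (0:ℝ))) (F := F) (F' := F')
    (x₀ := z) (s := Metric.ball z (z/2))
    (bound := fun t => Real.cosh t * (Real.exp (-(z/2) * Real.cosh t) * Real.cosh (ν * t)))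
    (Metric.ball_mem_nhds z hε)
    (Filter.Eventually.of_forall (fun w => (hcont w).aestronglyMeasurable.restrict))
    (integrable_K_integrand ν z hz)
    ((hcont' z).aestronglyMeasurable.restrict)
    ?_ ?_ ?_
  · have : (fun w => ∫ t in Ioi (0:ℝ), F w t) = fun w => besselK ν w := rfl
    rw [this] at main
    refine main.2.congr_deriv ?_
    have e : ∀ t : ℝ, F' z t = -(1/2) * (Real.exp (-z * Real.cosh t) * Real.cosh ((ν-1) * t)
        + Real.exp (-z * Real.cosh t) * Real.cosh ((ν+1) * t)) := by
      intro t
      have c1 : Real.cosh ((ν+1) * t) = Real.cosh (ν*t + t) := by ring_nf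
      have c2 : Real.cosh ((ν-1) * t) = Real.cosh (ν*t - t) := by ring_nf
      simp only [hF', c1, c2, Real.cosh_add, Real.cosh_sub]
      ring
    rw [setIntegral_congr_fun measurableSet_Ioi (fun t _ => e t)]
    rw [integral_const_mul, integral_add (integrable_K_integrand (ν-1) z hz)
      (integrable_K_integrand (ν+1) z hz)]
    rfl
  · -- bound on F'
    apply Filter.Eventually.of_forall
    intro t w hw
    rw [Metric.mem_ball, Real.dist_eq, abs_lt] at hw
    have hw2 : z/2 < w := by linarith [hw.1]
    simp only [hF', Real.norm_eq_abs, abs_mul, abs_neg, abs_of_pos (Real.cosh_pos t),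
      abs_of_pos (Real.exp_pos _), abs_of_pos (Real.cosh_pos (ν * t))]
    have : Real.exp (-w * Real.cosh t) ≤ Real.exp (-(z/2) * Real.cosh t) := by
      rw [Real.exp_le_exp]
      have := (Real.cosh_pos t)
      nlinarith
    exact mul_le_mul_of_nonneg_left
      (mul_le_mul_of_nonneg_right this (Real.cosh_pos _).le) (Real.cosh_pos t).le
  · -- bound integrable
    have := integrable_coshcosh ν (z/2) hε
    apply this.congr
    apply Filter.Eventually.of_forall
    intro t; ring
  · -- differentiability
    apply Filter.Eventually.of_forall
    intro t w hw
    have h1 : HasDerivAt (fun w : ℝ => -w * Real.cosh t) (-(Real.cosh t)) w := by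
      simpa using ((hasDerivAt_id w).neg.mul_const (Real.cosh t))
    have h2 := h1.exp.mul_const (Real.cosh (ν * t))
    refine h2.congr_deriv ?_
    simp only [hF']; ring

lemma J_change_of_var (ν z : ℝ) (hz : 0 < z) :
    z ^ ν * ∫ t in Ioi (0:ℝ), Real.exp (-z * Real.cosh t) * Real.exp (ν * t)
      = 2 ^ ν * ∫ s in Ioi (z/2), Real.exp (-s - z^2/(4*s)) * s ^ (ν - 1) := by
  set f : ℝ → ℝ := fun t => z/2 * Real.exp t with hfdef
  set g : ℝ → ℝ := fun s => Real.exp (-s - z^2/(4*s)) * s ^ (ν - 1) with hgdef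
  have himg : f '' Ioi 0 = Ioi (z/2) := by
    ext y
    constructor
    · rintro ⟨t, ht, rfl⟩
      have : 1 < Real.exp t := by
        rw [← Real.exp_zero]; exact Real.exp_lt_exp.mpr ht
      simp only [hfdef, mem_Ioi]
      nlinarith
    · intro hy
      rw [mem_Ioi] at hy
      have hy0 : 0 < y := lt_trans (by linarith) hy
      refine ⟨Real.log (y / (z/2)), ?_, ?_⟩
      · rw [mem_Ioi]
        apply Real.log_pos
        rw [lt_div_iff₀ (by linarith)]
        linarith
      · simp only [hfdef]
        rw [Real.exp_log (by positivity)]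
        field_simp
  have hderiv : ∀ t ∈ Ioi (0:ℝ), HasDerivWithinAt f (z/2 * Real.exp t) (Ioi 0) t := by
    intro t _
    exact ((Real.hasDerivAt_exp t).const_mul (z/2)).hasDerivWithinAt
  have hinj : InjOn f (Ioi 0) := by
    intro a _ b _ hab
    simp only [hfdef] at hab
    have : Real.exp a = Real.exp b :=
      mul_left_cancel₀ (by linarith : (z/2 : ℝ) ≠ 0) hab
    exact Real.exp_injective this
  have := integral_image_eq_integral_abs_deriv_smul measurableSet_Ioi hderiv hinj g
  rw [himg] at this
  rw [this]
  have key : ∀ t ∈ Ioi (0:ℝ),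
      |z/2 * Real.exp t| • g (f t)
        = (z/2) ^ ν * (Real.exp (-z * Real.cosh t) * Real.exp (ν * t)) := by
    intro t _
    have het : (0:ℝ) < Real.exp t := Real.exp_pos t
    have hft : 0 < z/2 * Real.exp t := by positivity
    have habs : |z/2 * Real.exp t| = z/2 * Real.exp t := abs_of_pos hft
    simp only [hgdef, hfdef, smul_eq_mul, habs]
    have e1 : z^2 / (4 * (z/2 * Real.exp t)) = z/2 * Real.exp (-t) := by
      rw [Real.exp_neg]; field_simp; ring
    have e2 : -(z/2 * Real.exp t) - z/2 * Real.exp (-t) = -z * Real.cosh t := by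
      rw [Real.cosh_eq]; ring
    have e3 : (z/2 * Real.exp t) ^ (ν - 1)
        = (z/2) ^ (ν - 1) * Real.exp ((ν - 1) * t) := by
      rw [Real.mul_rpow (by linarith) het.le]
      congr 1
      rw [Real.rpow_def_of_pos het, Real.log_exp]
      ring_nf
    rw [e1, e2, e3]
    have e4 : (z/2 : ℝ) * (z/2) ^ (ν - 1) = (z/2) ^ ν := by
      nth_rewrite 1 [← Real.rpow_one (z/2)]
      rw [← Real.rpow_add (by linarith : (0:ℝ) < z/2)]
      norm_num
    calc z/2 * Real.exp t * (Real.exp (-z * Real.cosh t) * ((z/2) ^ (ν-1) * Real.exp ((ν-1)*t)))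
        = (z/2 * (z/2)^(ν-1)) * (Real.exp (-z * Real.cosh t) * (Real.exp t * Real.exp ((ν-1)*t))) := by ring
      _ = (z/2) ^ ν * (Real.exp (-z * Real.cosh t) * Real.exp (ν * t)) := by
          rw [e4, ← Real.exp_add]; ring_nf
  rw [setIntegral_congr_fun measurableSet_Ioi key, integral_const_mul, ← mul_assoc,
    ← Real.mul_rpow (by norm_num : (0:ℝ) ≤ 2) (by linarith : (0:ℝ) ≤ z/2)]
  have h2z : (2:ℝ) * (z/2) = z := by ring
  rw [h2z]

lemma tendsto_tail_integral {ν : ℝ} (hν : 0 < ν) :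
    Tendsto (fun z => ∫ s in Ioi (z/2), Real.exp (-s - z^2/(4*s)) * s ^ (ν - 1))
      (nhdsWithin 0 (Ioi (0:ℝ))) (nhds (Real.Gamma ν)) := by
  rw [Real.Gamma_eq_integral hν]
  set F : ℝ → ℝ → ℝ := fun z s =>
    (Ioi (z/2)).indicator (fun s => Real.exp (-s - z^2/(4*s)) * s ^ (ν - 1)) s with hFdef
  have hmeas : ∀ z : ℝ, AEStronglyMeasurable (F z) (volume.restrict (Ioi 0)) := by
    intro z
    apply AEStronglyMeasurable.indicator _ measurableSet_Ioi
    apply ContinuousOn.aestronglyMeasurable _ measurableSet_Ioi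
    apply ContinuousOn.mul
    · apply Real.continuous_exp.comp_continuousOn
      apply ContinuousOn.sub continuous_neg.continuousOn
      apply ContinuousOn.div continuous_const.continuousOn
        (continuous_const.mul continuous_id).continuousOn
      intro s hs
      have : (0:ℝ) < s := hs
      exact mul_ne_zero (by norm_num) this.ne'
    · intro s hs
      have : (0:ℝ) < s := hs
      exact (Real.continuousAt_rpow_const s _ (Or.inl this.ne')).continuousWithinAt
  have key : Tendsto (fun z => ∫ s in Ioi (0:ℝ), F z s)
      (nhdsWithin 0 (Ioi (0:ℝ))) (nhds (∫ s in Ioi (0:ℝ), Real.exp (-s) * s ^ (ν - 1))) := by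
    apply tendsto_integral_filter_of_dominated_convergence
      (fun s => Real.exp (-s) * s ^ (ν - 1))
    · exact Filter.Eventually.of_forall hmeas
    · apply Filter.Eventually.of_forall
      intro z
      filter_upwards [ae_restrict_mem measurableSet_Ioi] with s hs
      simp only [Real.norm_eq_abs, hFdef]
      by_cases h : s ∈ Ioi (z/2)
      · rw [indicator_of_mem h]
        have hs0 : (0:ℝ) < s := hs
        have h1 : (0:ℝ) ≤ s ^ (ν - 1) := (Real.rpow_pos_of_pos hs0 _).le
        rw [abs_of_nonneg (by positivity)]
        apply mul_le_mul_of_nonneg_right _ h1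
        rw [Real.exp_le_exp]
        have : 0 ≤ z^2/(4*s) := by positivity
        linarith
      · rw [indicator_of_notMem h, abs_zero]
        have hs0 : (0:ℝ) < s := hs
        positivity
    · exact Real.GammaIntegral_convergent hν
    · filter_upwards [ae_restrict_mem measurableSet_Ioi] with s hs
      have hs0 : (0:ℝ) < s := hs
      have hev : ∀ᶠ z in nhdsWithin 0 (Ioi (0:ℝ)),
          F z s = Real.exp (-s - z^2/(4*s)) * s ^ (ν - 1) := by
        filter_upwards [Ioo_mem_nhdsGT_of_mem (by constructor <;> [rfl; exact hs0] : (0:ℝ) ∈ Ico 0 s)] with z hz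
        simp only [hFdef]
        apply indicator_of_mem
        rw [mem_Ioi]
        rcases hz with ⟨hz0, hzs⟩
        linarith
      have hcont : Tendsto (fun z : ℝ => Real.exp (-s - z^2/(4*s)) * s ^ (ν - 1))
          (nhdsWithin 0 (Ioi (0:ℝ))) (nhds (Real.exp (-s) * s ^ (ν - 1))) := by
        have : Continuous (fun z : ℝ => Real.exp (-s - z^2/(4*s)) * s ^ (ν - 1)) := by
          apply Continuous.mul _ continuous_const
          apply Real.continuous_exp.comp
          exact (continuous_const.sub ((continuous_pow 2).div_const _))
        have h0 := this.tendsto 0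
        have : (-s - 0^2/(4*s)) = -s := by norm_num
        rw [this] at h0
        exact h0.mono_left nhdsWithin_le_nhds
      exact hcont.congr' (hev.mono fun z hz => hz.symm)
  have : ∀ᶠ z in nhdsWithin 0 (Ioi (0:ℝ)),
      (∫ s in Ioi (z/2), Real.exp (-s - z^2/(4*s)) * s ^ (ν - 1)) = ∫ s in Ioi (0:ℝ), F z s := by
    filter_upwards [self_mem_nhdsWithin] with z hz
    rw [mem_Ioi] at hz
    simp only [hFdef]
    rw [setIntegral_indicator measurableSet_Ioi]
    congr 1
    rw [Ioi_inter_Ioi]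
    congr 1
    rw [max_eq_right (by linarith)]
  exact key.congr' (this.mono fun z hz => hz.symm)

lemma tendsto_rpow_neg_part {ν : ℝ} (hν : 0 < ν) :
    Tendsto (fun z => z ^ ν * ∫ t in Ioi (0:ℝ), Real.exp (-z * Real.cosh t) * Real.exp (-ν * t))
      (nhdsWithin 0 (Ioi (0:ℝ))) (nhds 0) := by
  set C : ℝ := ∫ t in Ioi (0:ℝ), Real.exp (-ν * t) with hC
  have hrpow : Tendsto (fun z : ℝ => z ^ ν * C) (nhdsWithin 0 (Ioi (0:ℝ))) (nhds 0) := by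
    have h1 : Tendsto (fun z : ℝ => z ^ ν) (nhds 0) (nhds ((0:ℝ) ^ ν)) :=
      (Real.continuousAt_rpow_const 0 ν (Or.inr hν.le)).tendsto
    rw [Real.zero_rpow hν.ne'] at h1
    have := (h1.mono_left (nhdsWithin_le_nhds (s := Ioi (0:ℝ)))).mul_const C
    simpa using this
  apply tendsto_of_tendsto_of_tendsto_of_le_of_le' tendsto_const_nhds hrpow
  · filter_upwards [self_mem_nhdsWithin] with z hz
    rw [mem_Ioi] at hz
    apply mul_nonneg (Real.rpow_nonneg hz.le ν)
    apply setIntegral_nonneg measurableSet_Ioi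
    intro t _
    positivity
  · filter_upwards [self_mem_nhdsWithin] with z hz
    rw [mem_Ioi] at hz
    apply mul_le_mul_of_nonneg_left _ (Real.rpow_nonneg hz.le ν)
    apply setIntegral_mono_on (integrable_J_integrand (-ν) z hz)
      (exp_neg_integrableOn_Ioi 0 hν) measurableSet_Ioi
    intro t _
    calc Real.exp (-z * Real.cosh t) * Real.exp (-ν * t)
        ≤ 1 * Real.exp (-ν * t) := by
          apply mul_le_mul_of_nonneg_right _ (Real.exp_pos _).le
          apply Real.exp_le_one_iff.mpr  -- check name
          nlinarith [Real.cosh_pos t]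
      _ = Real.exp (-ν * t) := one_mul _

lemma tendsto_rpow_mul_besselK {ν : ℝ} (hν : 0 < ν) :
    Tendsto (fun z => z ^ ν * besselK ν z) (nhdsWithin 0 (Ioi (0:ℝ)))
      (nhds (2 ^ (ν - 1) * Real.Gamma ν)) := by
  have hsplit : ∀ z : ℝ, 0 < z → z ^ ν * besselK ν z
      = (1/2) * (z ^ ν * ∫ t in Ioi (0:ℝ), Real.exp (-z * Real.cosh t) * Real.exp (ν * t))
      + (1/2) * (z ^ ν * ∫ t in Ioi (0:ℝ), Real.exp (-z * Real.cosh t) * Real.exp (-ν * t)) := by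
    intro z hz
    have e : ∀ t : ℝ, Real.exp (-z * Real.cosh t) * Real.cosh (ν * t)
        = (Real.exp (-z * Real.cosh t) * Real.exp (ν * t)
          + Real.exp (-z * Real.cosh t) * Real.exp (-ν * t)) / 2 := by
      intro t
      have h' : -(ν * t) = -ν * t := by ring
      rw [Real.cosh_eq (ν * t), h']
      ring
    unfold besselK
    rw [setIntegral_congr_fun measurableSet_Ioi (fun t _ => e t), integral_div,
      integral_add (integrable_J_integrand ν z hz) (integrable_J_integrand (-ν) z hz)]
    ring
  have h1 : Tendsto (fun z => (1/2 : ℝ) * (z ^ ν * ∫ t in Ioi (0:ℝ),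
      Real.exp (-z * Real.cosh t) * Real.exp (ν * t))) (nhdsWithin 0 (Ioi (0:ℝ)))
      (nhds (2 ^ (ν - 1) * Real.Gamma ν)) := by
    have heq : ∀ᶠ z in nhdsWithin 0 (Ioi (0:ℝ)),
        ((1/2 : ℝ) * 2 ^ ν) * (∫ s in Ioi (z/2), Real.exp (-s - z^2/(4*s)) * s ^ (ν - 1))
        = (1/2 : ℝ) * (z ^ ν * ∫ t in Ioi (0:ℝ),
            Real.exp (-z * Real.cosh t) * Real.exp (ν * t)) := by
      filter_upwards [self_mem_nhdsWithin] with z hz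
      rw [mem_Ioi] at hz
      rw [J_change_of_var ν z hz]
      ring
    have := ((tendsto_tail_integral hν).const_mul ((1/2 : ℝ) * 2 ^ ν)).congr' heq
    convert this using 2
    rw [Real.rpow_sub (by norm_num : (0:ℝ) < 2), Real.rpow_one]
    ring
  have h2 := (tendsto_rpow_neg_part hν).const_mul (1/2 : ℝ)
  have hsum := h1.add h2
  rw [mul_zero, add_zero] at hsum
  apply hsum.congr'
  filter_upwards [self_mem_nhdsWithin] with z hz
  rw [mem_Ioi] at hz
  rw [hsplit z hz]

lemma besselK_neg (μ z : ℝ) : besselK (-μ) z = besselK μ z := by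
  unfold besselK
  congr 1
  ext t
  rw [show -μ * t = -(μ * t) by ring, Real.cosh_neg]

/-- the Wronskian value at the origin:
`−2 y(x) y′(x) → π (β+2) / (2 sin(π/(β+2)))` as `x → 0⁺`. -/
theorem stmt9 (β : ℝ) (hβ : 0 < β) :
    Tendsto (fun x : ℝ => -2 * yPlus β x * deriv (yPlus β) x)
      (nhdsWithin 0 (Ioi (0 : ℝ)))
      (nhds (π * (β + 2) / (2 * Real.sin (π / (β + 2))))) := by
  have hb2 : (0:ℝ) < β + 2 := by linarith
  set ν : ℝ := 1 / (β + 2) with hνdef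
  set a : ℝ := (β + 2) / 2 with hadef
  set c : ℝ := 2 / (β + 2) with hcdef
  have hν : 0 < ν := by positivity
  have hν1 : ν < 1 := by
    rw [hνdef, div_lt_one hb2]; linarith
  have h1ν : 0 < 1 - ν := by linarith
  have ha : 0 < a := by positivity
  have hc : 0 < c := by positivity
  have hca : c * a = 1 := by rw [hcdef, hadef]; field_simp
  have haν : 2 * a * ν = 1 := by rw [hadef, hνdef]; field_simp
  -- the limit of the z-side function
  have hsin : Real.sin (π * ν) ≠ 0 := by
    apply ne_of_gt
    apply Real.sin_pos_of_pos_of_lt_pi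
    · positivity
    · rw [hνdef]
      calc π * (1/(β+2)) < π * 1 := by
            apply mul_lt_mul_of_pos_left _ Real.pi_pos
            rw [div_lt_one hb2]; linarith
        _ = π := mul_one π
  have L : Tendsto (fun z : ℝ => 2 * a * (z * (besselK ν z * besselK (1-ν) z)))
      (nhdsWithin 0 (Ioi (0:ℝ)))
      (nhds (π * (β + 2) / (2 * Real.sin (π / (β + 2))))) := by
    have hmul := (tendsto_rpow_mul_besselK hν).mul (tendsto_rpow_mul_besselK h1ν)
    have heq : ∀ᶠ z in nhdsWithin 0 (Ioi (0:ℝ)),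
        (z ^ ν * besselK ν z) * (z ^ (1-ν) * besselK (1-ν) z)
          = z * (besselK ν z * besselK (1-ν) z) := by
      filter_upwards [self_mem_nhdsWithin] with z hz
      rw [mem_Ioi] at hz
      have : z ^ ν * z ^ (1-ν) = z := by
        rw [← Real.rpow_add hz]
        norm_num
      calc (z ^ ν * besselK ν z) * (z ^ (1-ν) * besselK (1-ν) z)
          = (z ^ ν * z ^ (1-ν)) * (besselK ν z * besselK (1-ν) z) := by ring
        _ = z * (besselK ν z * besselK (1-ν) z) := by rw [this]
    have hmul2 := (hmul.congr' heq).const_mul (2*a)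
    convert hmul2 using 2
    have h2pow : (2:ℝ) ^ (ν - 1) * 2 ^ (1 - ν - 1) = 1/2 := by
      rw [← Real.rpow_add (by norm_num : (0:ℝ) < 2),
        show ν - 1 + (1 - ν - 1) = -1 by ring, Real.rpow_neg_one]
      norm_num
    have hgamma := Real.Gamma_mul_Gamma_one_sub ν
    have hπν : π * ν = π / (β + 2) := by rw [hνdef]; ring
    rw [hπν] at hgamma
    calc π * (β + 2) / (2 * Real.sin (π / (β + 2)))
        = (2 * a) * ((1/2) * (Real.Gamma ν * Real.Gamma (1 - ν))) := by
          rw [hgamma, hadef]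
          have hs : Real.sin (π / (β + 2)) ≠ 0 := by rwa [hπν] at hsin
          field_simp
      _ = 2 * a * (2 ^ (ν - 1) * Real.Gamma ν * (2 ^ (1 - ν - 1) * Real.Gamma (1 - ν))) := by
          rw [show (2:ℝ) ^ (ν - 1) * Real.Gamma ν * (2 ^ (1 - ν - 1) * Real.Gamma (1 - ν))
            = (2 ^ (ν - 1) * 2 ^ (1 - ν - 1)) * (Real.Gamma ν * Real.Gamma (1 - ν)) by ring,
            h2pow]
  -- the inner map tends to 0 within Ioi 0
  have hzmap : Tendsto (fun x : ℝ => c * x ^ a) (nhdsWithin 0 (Ioi (0:ℝ)))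
      (nhdsWithin 0 (Ioi (0:ℝ))) := by
    apply tendsto_nhdsWithin_of_tendsto_nhds_of_eventually_within
    · have h1 : Tendsto (fun x : ℝ => x ^ a) (nhds 0) (nhds ((0:ℝ) ^ a)) :=
        (Real.continuousAt_rpow_const 0 a (Or.inr ha.le)).tendsto
      rw [Real.zero_rpow ha.ne'] at h1
      have := (h1.mono_left (nhdsWithin_le_nhds (s := Ioi (0:ℝ)))).const_mul c
      simpa using this
    · filter_upwards [self_mem_nhdsWithin] with x hx
      rw [mem_Ioi] at hx
      have := Real.rpow_pos_of_pos hx a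
      rw [mem_Ioi]
      positivity
  -- eventual equality
  have ev : ∀ᶠ x in nhdsWithin 0 (Ioi (0:ℝ)),
      ((fun z : ℝ => 2 * a * (z * (besselK ν z * besselK (1-ν) z))) ∘ (fun x : ℝ => c * x ^ a)) x
        = -2 * yPlus β x * deriv (yPlus β) x := by
    filter_upwards [self_mem_nhdsWithin] with x hx
    rw [mem_Ioi] at hx
    have hxa : 0 < x ^ a := Real.rpow_pos_of_pos hx a
    have hz0 : 0 < c * x ^ a := by positivity
    have hzx : HasDerivAt (fun x : ℝ => c * x ^ a) (c * (a * x ^ (a-1))) x :=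
      (Real.hasDerivAt_rpow_const (Or.inl hx.ne')).const_mul c
    have hKd : HasDerivAt (fun x : ℝ => besselK ν (c * x ^ a))
        (-(1/2) * (besselK (1-ν) (c * x ^ a) + besselK (ν+1) (c * x ^ a))
          * (c * (a * x ^ (a-1)))) x := by
      have h0 := (hasDerivAt_besselK ν (c * x ^ a) hz0).comp x hzx
      simp only [Function.comp_def] at h0
      rw [show ν - 1 = -(1-ν) by ring, besselK_neg] at h0
      exact h0
    have hyXdef : yPlus β = fun x : ℝ => Real.sqrt x * besselK ν (c * x ^ a) := by
      funext u; simp only [yPlus, hνdef, hadef, hcdef]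
    have hy : HasDerivAt (yPlus β)
        (1/(2*Real.sqrt x) * besselK ν (c * x ^ a)
          + Real.sqrt x * (-(1/2) * (besselK (1-ν) (c * x ^ a) + besselK (ν+1) (c * x ^ a))
            * (c * (a * x ^ (a-1))))) x := by
      rw [hyXdef]
      exact (Real.hasDerivAt_sqrt hx.ne').mul hKd
    rw [hy.deriv]
    have hyX : yPlus β x = Real.sqrt x * besselK ν (c * x ^ a) := by
      simp only [yPlus, hνdef, hadef, hcdef]
    rw [hyX]
    simp only [Function.comp]
    -- recurrence
    have hrec := besselK_recurrence ν (c * x ^ a) hz0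
    rw [show ν - 1 = -(1-ν) by ring, besselK_neg] at hrec
    set S : ℝ := Real.sqrt x with hSdef
    set P : ℝ := besselK ν (c * x ^ a) with hPdef
    set Q : ℝ := besselK (1-ν) (c * x ^ a) with hQdef
    set R : ℝ := besselK (ν+1) (c * x ^ a) with hRdef
    have hS : 0 < S := Real.sqrt_pos.mpr hx
    have hS2 : S * S = x := Real.mul_self_sqrt hx.le
    have hxa1 : x * x ^ (a-1) = x ^ a := by
      nth_rewrite 1 [← Real.rpow_one x]
      rw [← Real.rpow_add hx]
      norm_num
    clear_value ν a c
    have h5 : c * x ^ a * R = c * x ^ a * Q + 2 * ν * P := by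
      linear_combination -hrec
    have hXPR : x ^ a * P * R = x ^ a * P * Q + P^2 := by
      linear_combination (a*P) * h5 - (x ^ a * P * R - x ^ a * P * Q) * hca + P^2 * haν
    have hSne : S ≠ 0 := hS.ne'
    calc 2 * a * (c * x ^ a * (besselK ν (c * x ^ a) * besselK (1-ν) (c * x ^ a)))
        = -P^2 + x * (P * (Q + R)) * (c * (a * x ^ (a-1))) := by
          linear_combination (-(c*a*P*Q) - c*a*P*R) * hxa1 - (a*c) * hXPR - P^2 * hca
      _ = -2 * (S * P) * (1/(2*S) * P + S * (-(1/2) * (Q + R) * (c * (a * x ^ (a-1))))) := by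
          field_simp
          linear_combination (-(P*(Q+R)*c*a*x^(a-1))) * hS2
  exact (L.comp hzmap).congr' ev
end
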